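/- Let m = 1 and suppose V and R satisfy the (P,p,T,t,1)-quadratic Lyapunov inequality with (P,p,T,t) = (0,0,0,1). Let f_1 ∈ F_{σ_1,β_1}(H), let {ξ_k = (x_k,u_k,y_k,F_k)}_{k≥0} be any trajectory of the algorithm (ξ_0 is algorithm-consistent and ξ_{k+1} is a successor of ξ_k for every k), and let ξ⋆ = (x⋆,u⋆,y⋆,F⋆) be a fixed point. Then for every k ≥ 0: (a) the function value suboptimalities f_1(y_j) − f_1(y⋆) (j = 0,…,k) are nonnegative and sum to at most V(ξ_0,ξ⋆); and (b) the ergodic suboptimality satisfies f_1((1/(k+1)) Σ_{j=0}^{k} y_j) − f_1(y⋆) ≤ V(ξ_0,ξ⋆)/(k+1). -/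

import Mathlib

open scoped ENNReal
open Matrix

/-- `u` is a subgradient of `f` at `x`: `f z ≥ f x + ⟨u, z - x⟩` for all `z`. -/
def IsSubgradientAt {H : Type*} [NormedAddCommGroup H] [InnerProductSpace ℝ H]
    (f : H → ℝ) (u x : H) : Prop :=
  ∀ z : H, f x + (inner ℝ u (z - x) : ℝ) ≤ f z

/-- `f` is `σ`-strongly convex: `f - (σ/2)‖·‖²` is convex. -/
def StronglyConvex {H : Type*} [NormedAddCommGroup H] [InnerProductSpace ℝ H]
    (σ : ℝ) (f : H → ℝ) : Prop :=
  ConvexOn ℝ Set.univ (fun x => f x - σ / 2 * ‖x‖ ^ 2)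

/-- `f` is `β`-smooth: differentiable with `β`-Lipschitz gradient. -/
def IsSmoothWith {H : Type*} [NormedAddCommGroup H] [InnerProductSpace ℝ H]
    [CompleteSpace H] (β : ℝ) (f : H → ℝ) : Prop :=
  Differentiable ℝ f ∧ ∀ x y : H, ‖gradient f x - gradient f y‖ ≤ β * ‖x - y‖

/-- Membership in the function class `F_{σ,β}(H)`. -/
def MemFClass {H : Type*} [NormedAddCommGroup H] [InnerProductSpace ℝ H]
    [CompleteSpace H] (σ : ℝ) (β : ℝ≥0∞) (f : H → ℝ) : Prop :=
  StronglyConvex σ f ∧ (β ≠ ⊤ → IsSmoothWith β.toReal f) ∧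
    (β = ⊤ → LowerSemicontinuous f)

/-- `(M ⊗ Id) z` for a real matrix `M` acting on tuples of Hilbert-space vectors. -/
def matVecH {H : Type*} [AddCommGroup H] [Module ℝ H] {p q : Type*} [Fintype q]
    (M : Matrix p q ℝ) (z : q → H) : p → H :=
  fun i => ∑ j, M i j • z j

/-- The point `(x, u, y, F)` is algorithm-consistent for `f`. -/
def AlgConsistent {H : Type*} [NormedAddCommGroup H] [InnerProductSpace ℝ H]
    {n m : ℕ} (C : Matrix (Fin m) (Fin n) ℝ) (D : Matrix (Fin m) (Fin m) ℝ)
    (f : Fin m → H → ℝ) (x : Fin n → H) (u y : Fin m → H) (F : Fin m → ℝ) : Prop :=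
  y = matVecH C x + matVecH D u ∧ (∀ i, IsSubgradientAt (f i) (u i) (y i)) ∧
    ∀ i, F i = f i (y i)

/-- `(x, u, y, F)` is a fixed point of the algorithm. -/
def IsFixedPoint {H : Type*} [NormedAddCommGroup H] [InnerProductSpace ℝ H]
    {n m : ℕ} (A : Matrix (Fin n) (Fin n) ℝ) (B : Matrix (Fin n) (Fin m) ℝ)
    (C : Matrix (Fin m) (Fin n) ℝ) (D : Matrix (Fin m) (Fin m) ℝ)
    (f : Fin m → H → ℝ) (x : Fin n → H) (u y : Fin m → H) (F : Fin m → ℝ) : Prop :=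
  x = matVecH A x + matVecH B u ∧ AlgConsistent C D f x u y F

/-- `(xp, up, yp, Fp)` is a successor of an algorithm-consistent point with data `(x, u)`. -/
def IsSuccessor {H : Type*} [NormedAddCommGroup H] [InnerProductSpace ℝ H]
    {n m : ℕ} (A : Matrix (Fin n) (Fin n) ℝ) (B : Matrix (Fin n) (Fin m) ℝ)
    (C : Matrix (Fin m) (Fin n) ℝ) (D : Matrix (Fin m) (Fin m) ℝ)
    (f : Fin m → H → ℝ) (x : Fin n → H) (u : Fin m → H)
    (xp : Fin n → H) (up yp : Fin m → H) (Fp : Fin m → ℝ) : Prop :=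
  xp = matVecH A x + matVecH B u ∧ AlgConsistent C D f xp up yp Fp

/-- The matrix `N = [I_{m−1}; −𝟏ᵀ] ∈ ℝ^{m×(m−1)}`. -/
def Nmat (m : ℕ) : Matrix (Fin m) (Fin (m - 1)) ℝ :=
  Matrix.of fun i j => if (i : ℕ) = (j : ℕ) then 1 else if (i : ℕ) = m - 1 then -1 else 0

/-- Assumption 1: the range and null-space conditions on `(A, B, C, D)`. -/
def Assumption1 {n m : ℕ} (A : Matrix (Fin n) (Fin n) ℝ) (B : Matrix (Fin n) (Fin m) ℝ)
    (C : Matrix (Fin m) (Fin n) ℝ) (D : Matrix (Fin m) (Fin m) ℝ) : Prop :=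
  LinearMap.range (Matrix.fromBlocks (B * Nmat m) 0 (D * Nmat m)
      (Matrix.of fun (_ : Fin m) (_ : Fin 1) => (-1 : ℝ))).mulVecLin ≤
    LinearMap.range (Matrix.fromRows (1 - A) (-C)).mulVecLin ∧
  LinearMap.ker (Matrix.fromCols (1 - A) (-B)).mulVecLin ≤
    LinearMap.ker (Matrix.fromBlocks ((Nmat m)ᵀ * C) ((Nmat m)ᵀ * D) 0
      (Matrix.of fun (_ : Fin 1) (_ : Fin m) => (1 : ℝ))).mulVecLin

/-- Assumption 2: `D` lower triangular with nonpositive diagonal, and for each `i`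
either `β_i < +∞` or `D_{ii} < 0`. -/
def Assumption2 {m : ℕ} (β : Fin m → ℝ≥0∞) (D : Matrix (Fin m) (Fin m) ℝ) : Prop :=
  (∀ i j : Fin m, (i : ℕ) < (j : ℕ) → D i j = 0) ∧ (∀ i, D i i ≤ 0) ∧
    ∀ i, β i ≠ ⊤ ∨ D i i < 0

/-- Sum inner product quadratic form `Q(M, z) = ⟨z, (M ⊗ Id) z⟩` on `H^ι`. -/
noncomputable def quadFormH {H : Type*} [NormedAddCommGroup H] [InnerProductSpace ℝ H]
    {ι : Type*} [Fintype ι] (M : Matrix ι ι ℝ) (z : ι → H) : ℝ :=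
  ∑ i, ∑ j, M i j * (inner ℝ (z i) (z j) : ℝ)

/-- The index set of `ℝ^{n+2m}`, split as `n + m + m`. -/
abbrev StIdx (n m : ℕ) := Fin n ⊕ (Fin m ⊕ Fin m)

/-- The index set of `ℝ^{n+3m-1}`, split as `n + m + m + (m-1)`. -/
abbrev ColIdx (n m : ℕ) := Fin n ⊕ (Fin m ⊕ (Fin m ⊕ Fin (m - 1)))

/-- The index set of `ℝ^{2m}`. -/
abbrev TwoM (m : ℕ) := Fin m ⊕ Fin m

/-- The index set of `ℝ^{3m}`. -/
abbrev ThreeM (m : ℕ) := Fin 3 × Fin m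

/-- The tuple `(x, u, v) ∈ H^{n+2m}`. -/
def tripleH {H : Type*} {n m : ℕ} (x : Fin n → H) (u v : Fin m → H) : StIdx n m → H :=
  Sum.elim x (Sum.elim u v)

/-- The value `Q(Q,(x−x⋆,u,u⋆)) + qᵀ(F−F⋆)` of a quadratic ansatz. -/
noncomputable def Vval {H : Type*} [NormedAddCommGroup H] [InnerProductSpace ℝ H]
    {n m : ℕ} (Q : Matrix (StIdx n m) (StIdx n m) ℝ) (q : Fin m → ℝ)
    (x : Fin n → H) (u : Fin m → H) (F : Fin m → ℝ)
    (xs : Fin n → H) (us : Fin m → H) (Fs : Fin m → ℝ) : ℝ :=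
  quadFormH Q (tripleH (x - xs) u us) + ∑ i, q i * (F i - Fs i)

/-- `V` and `R` (given by `(Q,q)` and `(S,s)`) satisfy the `(P,p,T,t,ρ)`-quadratic
Lyapunov inequality for the algorithm `(A,B,C,D)` over the class determined by `σ, β`. -/
def QuadLyap {H : Type*} [NormedAddCommGroup H] [InnerProductSpace ℝ H] [CompleteSpace H]
    {n m : ℕ}
    (A : Matrix (Fin n) (Fin n) ℝ) (B : Matrix (Fin n) (Fin m) ℝ)
    (C : Matrix (Fin m) (Fin n) ℝ) (D : Matrix (Fin m) (Fin m) ℝ)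
    (σ : Fin m → ℝ) (β : Fin m → ℝ≥0∞)
    (Q S P T : Matrix (StIdx n m) (StIdx n m) ℝ) (q s p t : Fin m → ℝ) (ρ : ℝ) : Prop :=
  -- C1
  (∀ f : Fin m → H → ℝ, (∀ i, MemFClass (σ i) (β i) (f i)) →
    ∀ x u y F, AlgConsistent C D f x u y F →
    ∀ xp up yp Fp, IsSuccessor A B C D f x u xp up yp Fp →
    ∀ xs us ys Fs, IsFixedPoint A B C D f xs us ys Fs →
      Vval Q q xp up Fp xs us Fs ≤ ρ * Vval Q q x u F xs us Fs - Vval S s x u F xs us Fs) ∧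
  -- C2
  (∀ f : Fin m → H → ℝ, (∀ i, MemFClass (σ i) (β i) (f i)) →
    ∀ x u y F, AlgConsistent C D f x u y F →
    ∀ xs us ys Fs, IsFixedPoint A B C D f xs us ys Fs →
      Vval P p x u F xs us Fs ≤ Vval Q q x u F xs us Fs ∧ 0 ≤ Vval P p x u F xs us Fs) ∧
  -- C3
  (∀ f : Fin m → H → ℝ, (∀ i, MemFClass (σ i) (β i) (f i)) →
    ∀ x u y F, AlgConsistent C D f x u y F →
    ∀ xs us ys Fs, IsFixedPoint A B C D f xs us ys Fs →
      Vval T t x u F xs us Fs ≤ Vval S s x u F xs us Fs ∧ 0 ≤ Vval T t x u F xs us Fs)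

/-- Labels `∅`, `+`, `⋆` for points entering the interpolation inequalities. -/
inductive Lbl
  | o : Lbl
  | pl : Lbl
  | st : Lbl
deriving DecidableEq

instance : Fintype Lbl := ⟨{Lbl.o, Lbl.pl, Lbl.st}, by intro x; cases x <;> decide⟩

/-- A row of four column blocks of sizes `n, m, m, m-1`. -/
def rb4 {n m : ℕ} {r : Type*} (M1 : Matrix r (Fin n) ℝ) (M2 M3 : Matrix r (Fin m) ℝ)
    (M4 : Matrix r (Fin (m - 1)) ℝ) : Matrix r (ColIdx n m) ℝ :=
  Matrix.of fun i => Sum.elim (M1 i) (Sum.elim (M2 i) (Sum.elim (M3 i) (M4 i)))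

/-- Stack three `m`-row blocks into a `3m`-row matrix. -/
def stack3 {n m : ℕ} (R1 R2 R3 : Matrix (Fin m) (ColIdx n m) ℝ) :
    Matrix (ThreeM m) (ColIdx n m) ℝ :=
  Matrix.of fun p => (![R1, R2, R3] p.1) p.2

/-- The matrices `E_{i,j} ∈ ℝ^{3m×(n+3m−1)}` (zero for `i = j`). -/
def Emat {n m : ℕ} (A : Matrix (Fin n) (Fin n) ℝ) (B : Matrix (Fin n) (Fin m) ℝ)
    (C : Matrix (Fin m) (Fin n) ℝ) (D : Matrix (Fin m) (Fin m) ℝ) :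
    Lbl → Lbl → Matrix (ThreeM m) (ColIdx n m) ℝ
  | .o, .pl => stack3 (rb4 (C * (1 - A)) (D - C * B) (-D) (C * B * Nmat m))
      (rb4 0 1 0 0) (rb4 0 0 1 0)
  | .pl, .o => stack3 (rb4 (C * (A - 1)) (C * B - D) D (-(C * B * Nmat m)))
      (rb4 0 0 1 0) (rb4 0 1 0 0)
  | .o, .st => stack3 (rb4 C D 0 (-(D * Nmat m))) (rb4 0 1 0 0) (rb4 0 0 0 (Nmat m))
  | .st, .o => stack3 (rb4 (-C) (-D) 0 (D * Nmat m)) (rb4 0 0 0 (Nmat m)) (rb4 0 1 0 0)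
  | .pl, .st => stack3 (rb4 (C * A) (C * B) D (-(D * Nmat m) - C * B * Nmat m))
      (rb4 0 0 1 0) (rb4 0 0 0 (Nmat m))
  | .st, .pl => stack3 (rb4 (-(C * A)) (-(C * B)) (-D) (D * Nmat m + C * B * Nmat m))
      (rb4 0 0 0 (Nmat m)) (rb4 0 0 1 0)
  | _, _ => 0

/-- The matrices `H_{i,j} ∈ ℝ^{m×2m}` (zero for `i = j`). -/
def Hmat (m : ℕ) : Lbl → Lbl → Matrix (Fin m) (TwoM m) ℝ
  | .o, .pl => Matrix.fromCols 1 (-1)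
  | .pl, .o => Matrix.fromCols (-1) 1
  | .o, .st => Matrix.fromCols 1 0
  | .st, .o => Matrix.fromCols (-1) 0
  | .pl, .st => Matrix.fromCols 0 1
  | .st, .pl => Matrix.fromCols 0 (-1)
  | _, _ => 0

/-- The vector `a_l = −e_l ∈ ℝ^m`. -/
def aVec {m : ℕ} (l : Fin m) : Fin m → ℝ := -(Pi.single l 1)

/-- The interpolation matrices `M_l ∈ S^{3m}`. -/
noncomputable def Mmat {m : ℕ} (σ : Fin m → ℝ) (β : Fin m → ℝ≥0∞) (l : Fin m) :
    Matrix (ThreeM m) (ThreeM m) ℝ :=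
  if β l = ⊤ then
    Matrix.kronecker ((1 / 2 : ℝ) • !![σ l, 0, 1; 0, 0, 0; 1, 0, 0])
      (Matrix.diagonal (Pi.single l 1))
  else
    Matrix.kronecker
      ((1 / (2 * ((β l).toReal - σ l))) •
        !![(β l).toReal * σ l, -σ l, (β l).toReal;
           -σ l, 1, -1;
           (β l).toReal, -1, 1])
      (Matrix.diagonal (Pi.single l 1))

/-- `𝕄_{(l,i,j)} = E_{i,j}ᵀ M_l E_{i,j} ∈ S^{n+3m−1}`. -/
noncomputable def bbM {n m : ℕ} (A : Matrix (Fin n) (Fin n) ℝ) (B : Matrix (Fin n) (Fin m) ℝ)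
    (C : Matrix (Fin m) (Fin n) ℝ) (D : Matrix (Fin m) (Fin m) ℝ)
    (σ : Fin m → ℝ) (β : Fin m → ℝ≥0∞) (l : Fin m) (i j : Lbl) :
    Matrix (ColIdx n m) (ColIdx n m) ℝ :=
  (Emat A B C D i j)ᵀ * Mmat σ β l * Emat A B C D i j

/-- `𝕒_{(l,i,j)} = H_{i,j}ᵀ a_l ∈ ℝ^{2m}`. -/
def bba {m : ℕ} (l : Fin m) (i j : Lbl) : TwoM m → ℝ :=
  (Hmat m i j)ᵀ.mulVec (aVec l)

/-- `Σ_∅ = [I, 0, 0, 0; 0, I, 0, 0; 0, 0, 0, N] ∈ ℝ^{(n+2m)×(n+3m−1)}`. -/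
def SigO (n m : ℕ) : Matrix (StIdx n m) (ColIdx n m) ℝ :=
  Matrix.of (Sum.elim (rb4 1 0 0 0) (Sum.elim (rb4 0 1 0 0) (rb4 0 0 0 (Nmat m))))

/-- `Σ_+ = [A, B, 0, −BN; 0, 0, I, 0; 0, 0, 0, N] ∈ ℝ^{(n+2m)×(n+3m−1)}`. -/
def SigP {n m : ℕ} (A : Matrix (Fin n) (Fin n) ℝ) (B : Matrix (Fin n) (Fin m) ℝ) :
    Matrix (StIdx n m) (ColIdx n m) ℝ :=
  Matrix.of (Sum.elim (rb4 A B 0 (-(B * Nmat m)))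
    (Sum.elim (rb4 0 0 1 0) (rb4 0 0 0 (Nmat m))))

lemma convexOn_norm_sq' {H : Type*} [NormedAddCommGroup H] [InnerProductSpace ℝ H] :
    ConvexOn ℝ Set.univ (fun x : H => ‖x‖ ^ 2) := by
  refine ⟨convex_univ, ?_⟩
  intro x _ y _ a b ha hb hab
  have h1 : ‖a • x + b • y‖ ≤ a * ‖x‖ + b * ‖y‖ := by
    calc ‖a • x + b • y‖ ≤ ‖a • x‖ + ‖b • y‖ := norm_add_le _ _
    _ = a * ‖x‖ + b * ‖y‖ := by
        rw [norm_smul, norm_smul, Real.norm_eq_abs, Real.norm_eq_abs,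
          abs_of_nonneg ha, abs_of_nonneg hb]
  have h2 : ‖a • x + b • y‖ ^ 2 ≤ (a * ‖x‖ + b * ‖y‖) ^ 2 :=
    pow_le_pow_left₀ (norm_nonneg _) h1 2
  have h3 : (a * ‖x‖ + b * ‖y‖) ^ 2 ≤ a * ‖x‖ ^ 2 + b * ‖y‖ ^ 2 := by
    nlinarith [sq_nonneg (‖x‖ - ‖y‖), mul_nonneg ha hb]
  simpa using h2.trans h3

lemma convex_of_stronglyConvex' {H : Type*} [NormedAddCommGroup H] [InnerProductSpace ℝ H]
    {σ : ℝ} {f : H → ℝ} (hσ : 0 ≤ σ) (hf : StronglyConvex σ f) :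
    ConvexOn ℝ Set.univ f := by
  have h2 : ConvexOn ℝ Set.univ (fun x : H => σ / 2 * ‖x‖ ^ 2) := by
    simpa [smul_eq_mul] using convexOn_norm_sq'.smul (c := σ / 2) (by linarith)
  have h3 := hf.add h2
  have hEq : ((fun x : H => f x - σ / 2 * ‖x‖ ^ 2) + fun x : H => σ / 2 * ‖x‖ ^ 2) = f := by
    funext z; simp [Pi.add_apply]
  rwa [hEq] at h3

lemma Vval_zero_zero {H : Type*} [NormedAddCommGroup H] [InnerProductSpace ℝ H]
    {n m : ℕ} (x : Fin n → H) (u : Fin m → H) (F : Fin m → ℝ)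
    (xs : Fin n → H) (us : Fin m → H) (Fs : Fin m → ℝ) :
    Vval (0 : Matrix (StIdx n m) (StIdx n m) ℝ) 0 x u F xs us Fs = 0 := by
  simp [Vval, quadFormH]

lemma Vval_zero_one {H : Type*} [NormedAddCommGroup H] [InnerProductSpace ℝ H]
    {n : ℕ} (x : Fin n → H) (u : Fin 1 → H) (F : Fin 1 → ℝ)
    (xs : Fin n → H) (us : Fin 1 → H) (Fs : Fin 1 → ℝ) :
    Vval (0 : Matrix (StIdx n 1) (StIdx n 1) ℝ) (fun _ => 1) x u F xs us Fs
      = F 0 - Fs 0 := by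
  simp [Vval, quadFormH]

/-- For `m = 1` and a `(0,0,0,1,1)`-quadratic Lyapunov inequality: the function
value suboptimalities are nonnegative, their partial sums are bounded by
`V(ξ_0,ξ⋆)`, and the ergodic function value suboptimality decays like
`V(ξ_0,ξ⋆)/(k+1)`. -/
theorem quadLyap_function_value_suboptimality
    {H : Type*} [NormedAddCommGroup H] [InnerProductSpace ℝ H] [CompleteSpace H]
    {n : ℕ} (hn : 1 ≤ n)
    (A : Matrix (Fin n) (Fin n) ℝ) (B : Matrix (Fin n) (Fin 1) ℝ)
    (C : Matrix (Fin 1) (Fin n) ℝ) (D : Matrix (Fin 1) (Fin 1) ℝ)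
    (σ : Fin 1 → ℝ) (β : Fin 1 → ℝ≥0∞)
    (hσβ : ∀ i, 0 ≤ σ i ∧ ENNReal.ofReal (σ i) < β i)
    (Q S : Matrix (StIdx n 1) (StIdx n 1) ℝ) (q s : Fin 1 → ℝ)
    (hLyap : QuadLyap (H := H) A B C D σ β Q S 0 0 q s 0 (fun _ => 1) 1)
    (f : Fin 1 → H → ℝ) (hf : ∀ i, MemFClass (σ i) (β i) (f i))
    (x : ℕ → Fin n → H) (u y : ℕ → Fin 1 → H) (F : ℕ → Fin 1 → ℝ)
    (htraj0 : AlgConsistent C D f (x 0) (u 0) (y 0) (F 0))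
    (htraj : ∀ k : ℕ,
      IsSuccessor A B C D f (x k) (u k) (x (k + 1)) (u (k + 1)) (y (k + 1)) (F (k + 1)))
    (xs : Fin n → H) (us ys : Fin 1 → H) (Fs : Fin 1 → ℝ)
    (hfix : IsFixedPoint A B C D f xs us ys Fs) :
    -- (a) nonnegative suboptimalities with partial sums bounded by V(ξ₀,ξ⋆)
    (∀ k : ℕ, 0 ≤ f 0 (y k 0) - f 0 (ys 0)) ∧
    (∀ k : ℕ, ∑ j ∈ Finset.range (k + 1), (f 0 (y j 0) - f 0 (ys 0)) ≤
        Vval Q q (x 0) (u 0) (F 0) xs us Fs) ∧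
    -- (b) ergodic O(1/k) convergence
    (∀ k : ℕ,
      f 0 ((1 / (k + 1 : ℝ)) • ∑ j ∈ Finset.range (k + 1), y j 0) - f 0 (ys 0) ≤
        Vval Q q (x 0) (u 0) (F 0) xs us Fs / (k + 1 : ℝ)) := by
  obtain ⟨hC1, hC2, hC3⟩ := hLyap
  -- every point of the trajectory is algorithm-consistent
  have hcons : ∀ k, AlgConsistent C D f (x k) (u k) (y k) (F k) := by
    intro k
    cases k with
    | zero => exact htraj0
    | succ k => exact (htraj k).2
  set V : ℕ → ℝ := fun k => Vval Q q (x k) (u k) (F k) xs us Fs with hV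
  set R : ℕ → ℝ := fun k => Vval S s (x k) (u k) (F k) xs us Fs with hR
  -- nonnegativity of V
  have hVnn : ∀ k, 0 ≤ V k := by
    intro k
    have := hC2 f hf (x k) (u k) (y k) (F k) (hcons k) xs us ys Fs hfix
    rw [Vval_zero_zero] at this
    exact this.2.trans this.1
  -- F k 0 - Fs 0 ≥ 0 and ≤ R k
  have hFeq : ∀ k, F k 0 = f 0 (y k 0) := fun k => (hcons k).2.2 0
  have hFs : Fs 0 = f 0 (ys 0) := hfix.2.2.2 0
  have hRlb : ∀ k, F k 0 - Fs 0 ≤ R k ∧ 0 ≤ F k 0 - Fs 0 := by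
    intro k
    have := hC3 f hf (x k) (u k) (y k) (F k) (hcons k) xs us ys Fs hfix
    rw [Vval_zero_one] at this
    exact this
  -- descent inequality
  have hdesc : ∀ k, V (k + 1) ≤ V k - R k := by
    intro k
    have := hC1 f hf (x k) (u k) (y k) (F k) (hcons k)
      (x (k+1)) (u (k+1)) (y (k+1)) (F (k+1)) (htraj k) xs us ys Fs hfix
    simpa using this
  -- summed inequality
  have hsum : ∀ N : ℕ, ∑ j ∈ Finset.range N, R j ≤ V 0 - V N := by
    intro N
    induction N with
    | zero => simp
    | succ N ih =>
      rw [Finset.sum_range_succ]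
      have := hdesc N
      linarith
  have hnn : ∀ k : ℕ, 0 ≤ f 0 (y k 0) - f 0 (ys 0) := by
    intro k
    have := (hRlb k).2
    rwa [hFeq, hFs] at this
  have hpart : ∀ k : ℕ, ∑ j ∈ Finset.range (k + 1), (f 0 (y j 0) - f 0 (ys 0)) ≤
      Vval Q q (x 0) (u 0) (F 0) xs us Fs := by
    intro k
    have h1 : ∑ j ∈ Finset.range (k + 1), (f 0 (y j 0) - f 0 (ys 0)) ≤
        ∑ j ∈ Finset.range (k + 1), R j := by
      apply Finset.sum_le_sum
      intro j _
      have := (hRlb j).1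
      rwa [hFeq, hFs] at this
    have h2 := hsum (k + 1)
    have h3 := hVnn (k + 1)
    calc ∑ j ∈ Finset.range (k + 1), (f 0 (y j 0) - f 0 (ys 0))
        ≤ ∑ j ∈ Finset.range (k + 1), R j := h1
      _ ≤ V 0 - V (k + 1) := h2
      _ ≤ V 0 := by linarith
  refine ⟨hnn, hpart, ?_⟩
  -- (b) ergodic bound via Jensen
  intro k
  have hconv : ConvexOn ℝ Set.univ (f 0) :=
    convex_of_stronglyConvex' (hσβ 0).1 (hf 0).1
  have hkpos : (0 : ℝ) < (k : ℝ) + 1 := by positivity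
  set w : ℕ → ℝ := fun _ => 1 / ((k : ℝ) + 1) with hw
  have hw1 : ∑ j ∈ Finset.range (k + 1), w j = 1 := by
    simp [hw]
    field_simp
  have hjensen := hconv.map_sum_le (t := Finset.range (k + 1)) (w := w)
    (p := fun j => y j 0) (fun i _ => by positivity) hw1 (fun i _ => Set.mem_univ _)
  have hpt : ∑ j ∈ Finset.range (k + 1), w j • y j 0
      = (1 / (k + 1 : ℝ)) • ∑ j ∈ Finset.range (k + 1), y j 0 := by
    rw [Finset.smul_sum]
  rw [hpt] at hjensen
  simp only [smul_eq_mul] at hjensen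
  have hsum2 : ∑ j ∈ Finset.range (k + 1), w j * f 0 (y j 0)
      = (1 / ((k : ℝ) + 1)) * ∑ j ∈ Finset.range (k + 1), f 0 (y j 0) := by
    rw [Finset.mul_sum]
  rw [hsum2] at hjensen
  have hps := hpart k
  rw [Finset.sum_sub_distrib] at hps
  simp only [Finset.sum_const, Finset.card_range, nsmul_eq_mul] at hps
  have : (1 / ((k : ℝ) + 1)) * ∑ j ∈ Finset.range (k + 1), f 0 (y j 0)
      ≤ Vval Q q (x 0) (u 0) (F 0) xs us Fs / ((k : ℝ) + 1) + f 0 (ys 0) := by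
    rw [div_add' _ _ _ (ne_of_gt hkpos)]
    rw [one_div, inv_mul_le_iff₀ hkpos]
    have hk1 : ((k : ℝ) + 1) * ((Vval Q q (x 0) (u 0) (F 0) xs us Fs +
        f 0 (ys 0) * ((k : ℝ) + 1)) / ((k : ℝ) + 1))
        = Vval Q q (x 0) (u 0) (F 0) xs us Fs + f 0 (ys 0) * ((k : ℝ) + 1) := by
      field_simp
    rw [hk1]
    push_cast at hps ⊢
    linarith
  push_cast at hjensen this ⊢
  linarith
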